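/- Let φ: G → G be an endomorphism of a group G, and let H ≤ G be a subgroup such that φ(H) ⊆ H and for every x ∈ G there exists n ∈ ℕ with φⁿ(x) ∈ H. Then the map sending a φ_H-conjugacy class {x}_{φ_H} in H to the φ-conjugacy class {x}_φ in G is a bijection between the set of φ_H-conjugacy classes of H and the set of φ-conjugacy classes of G; in particular R(φ) = R(φ_H). -/
import Mathlib


/-- If `φ(H) ⊆ H` and every element is eventually mapped into `H` by some iterate of `φ`,
then intersecting with `H` gives a bijection between twisted conjugacy classes of `φ_H`
on `H` and those of `φ` on `G`; in particular `R(φ) = R(φ_H)`. -/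
theorem reidemeister_restriction {G : Type*} [Group G] (φ : G →* G) (H : Subgroup G)
    (hφH : ∀ h ∈ H, φ h ∈ H)
    (hev : ∀ x : G, ∃ n : ℕ, (⇑φ)^[n] x ∈ H) :
    ∃ e : Quot (fun x y : H => ∃ g : H, (y : G) = g * x * (φ g)⁻¹) ≃
          Quot (fun x y : G => ∃ g : G, y = g * x * (φ g)⁻¹),
      ∀ x : H, e (Quot.mk _ x) = Quot.mk _ (x : G) := by
  classical
  set rH : H → H → Prop := fun x y => ∃ g : H, (y : G) = g * x * (φ g)⁻¹ with hrHdef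
  set rG : G → G → Prop := fun x y => ∃ g : G, y = g * x * (φ g)⁻¹ with hrGdef
  have hiter : ∀ (n : ℕ) (x : G), x ∈ H → (⇑φ)^[n] x ∈ H := by
    intro n
    induction n with
    | zero => intro x hx; simpa using hx
    | succ n ih =>
      intro x hx
      rw [Function.iterate_succ_apply]
      exact ih _ (hφH x hx)
  have hmono : ∀ (a N : ℕ) (x : G), a ≤ N → (⇑φ)^[a] x ∈ H → (⇑φ)^[N] x ∈ H := by
    intro a N x h ha
    have : (⇑φ)^[N - a + a] x ∈ H := by
      rw [Function.iterate_add_apply]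
      exact hiter _ _ ha
    rwa [Nat.sub_add_cancel h] at this
  have stepG : ∀ (n : ℕ) (x : G), Quot.mk rG x = Quot.mk rG ((⇑φ)^[n] x) := by
    intro n x
    induction n with
    | zero => simp
    | succ n ih =>
      rw [Function.iterate_succ_apply', ih]
      exact Quot.sound ⟨((⇑φ)^[n] x)⁻¹, by simp [mul_assoc]⟩
  have stepH : ∀ (n : ℕ) (x : H),
      Quot.mk rH x = Quot.mk rH ⟨(⇑φ)^[n] (x : G), hiter n x x.2⟩ := by
    intro n x
    induction n with
    | zero => simp
    | succ n ih =>
      rw [ih]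
      apply Quot.sound
      refine ⟨(⟨(⇑φ)^[n] (x : G), hiter n x x.2⟩ : H)⁻¹, ?_⟩
      push_cast
      rw [Function.iterate_succ_apply']
      simp [mul_assoc]
  -- independence of the exponent
  have indep : ∀ (x : G) (n m : ℕ) (hn : (⇑φ)^[n] x ∈ H) (hm : (⇑φ)^[m] x ∈ H),
      Quot.mk rH ⟨(⇑φ)^[n] x, hn⟩ = Quot.mk rH ⟨(⇑φ)^[m] x, hm⟩ := by
    have key : ∀ (x : G) (n m : ℕ) (h : n ≤ m) (hn : (⇑φ)^[n] x ∈ H) (hm : (⇑φ)^[m] x ∈ H),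
        Quot.mk rH ⟨(⇑φ)^[n] x, hn⟩ = Quot.mk rH ⟨(⇑φ)^[m] x, hm⟩ := by
      intro x n m h hn hm
      have e1 := stepH (m - n) ⟨(⇑φ)^[n] x, hn⟩
      have hval : (⇑φ)^[m - n] ((⇑φ)^[n] x) = (⇑φ)^[m] x := by
        rw [← Function.iterate_add_apply, Nat.sub_add_cancel h]
      rw [e1]
      congr 1
      exact Subtype.ext hval
    intro x n m hn hm
    rcases le_total n m with h | h
    · exact key x n m h hn hm
    · exact (key x m n h hm hn).symm
  -- the backwards map on representatives
  let b : G → Quot rH := fun x => Quot.mk rH ⟨(⇑φ)^[(hev x).choose] x, (hev x).choose_spec⟩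
  have brel : ∀ x y : G, rG x y → b x = b y := by
    intro x y ⟨g, hg⟩
    obtain ⟨ng, hng⟩ := hev g
    set N := max (max (hev x).choose (hev y).choose) ng with hN
    have hxN : (⇑φ)^[N] x ∈ H :=
      hmono _ _ _ (le_trans (le_max_left _ _) (le_max_left _ _)) (hev x).choose_spec
    have hyN : (⇑φ)^[N] y ∈ H :=
      hmono _ _ _ (le_trans (le_max_right _ _) (le_max_left _ _)) (hev y).choose_spec
    have hgN : (⇑φ)^[N] g ∈ H := hmono _ _ _ (le_max_right _ _) hng
    have hrel : rH ⟨(⇑φ)^[N] x, hxN⟩ ⟨(⇑φ)^[N] y, hyN⟩ := by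
      refine ⟨⟨(⇑φ)^[N] g, hgN⟩, ?_⟩
      show (⇑φ)^[N] y = (⇑φ)^[N] g * (⇑φ)^[N] x * (φ ((⇑φ)^[N] g))⁻¹
      rw [hg]
      rw [iterate_map_mul, iterate_map_mul, iterate_map_inv]
      congr 2
      rw [← Function.iterate_succ_apply ⇑φ N g, Function.iterate_succ_apply' ⇑φ N g]
    calc b x = Quot.mk rH ⟨(⇑φ)^[N] x, hxN⟩ := indep x _ _ _ _
      _ = Quot.mk rH ⟨(⇑φ)^[N] y, hyN⟩ := Quot.sound hrel
      _ = b y := (indep y _ _ _ _).symm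
  refine ⟨⟨Quot.lift (fun x : H => Quot.mk rG (x : G))
      (fun a c ⟨g, hg⟩ => Quot.sound ⟨(g : G), hg⟩),
      Quot.lift b brel, ?_, ?_⟩, fun x => rfl⟩
  · intro q
    refine Quot.inductionOn q (fun x => ?_)
    exact (stepH (hev (x : G)).choose x).symm
  · intro q
    refine Quot.inductionOn q (fun x => ?_)
    exact (stepG (hev x).choose x).symm
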